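/- There exists a constant C > 0 such that the following holds for every instance: for every m, g, r as in the setup, every nonempty finite job set 𝒥 with sizes in (0, g(m)] and active-interval lengths in [1, μ] (μ ≥ 1), and every d ≥ μ, one has ∫_{t ∈ span(𝒥)} OPT1(𝒥(t) ∪ ℋ(t)) dt ≤ C · d · ∫_{t ∈ span(𝒥)} OPT1(𝒥(t)) dt (both integrands are piecewise constant with finitely many pieces, so the integrals are well defined). -/

import Mathlib

open scoped Classical
open Finset MeasureTheory

namespace BSHM

noncomputable section

/-- The set of candidate parents of machine type `i`: types `j ∈ M` with `j > i`
and a strictly smaller normalized cost rate per capacity unit. -/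
def pset (m : ℕ) (g r : ℕ → ℝ) (i : ℕ) : Set ℕ :=
  {j | j ≤ m ∧ i < j ∧ r j / g j < r i / g i}

/-- The parent `p i` of machine type `i` (equal to `0` when the parent is undefined,
since any actual parent has index `≥ 2`). -/
def p (m : ℕ) (g r : ℕ → ℝ) (i : ℕ) : ℕ := sInf (pset m g r i)

/-- `pdef i` asserts that the parent of `i` is defined. -/
def pdef (m : ℕ) (g r : ℕ → ℝ) (i : ℕ) : Prop := (pset m g r i).Nonempty

/-- One step of the parent relation: `b` is the (defined) parent of `a`. -/
def pstep (m : ℕ) (g r : ℕ → ℝ) (a b : ℕ) : Prop :=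
  pdef m g r a ∧ b = p m g r a

/-- `P i`: the set consisting of `i` together with all of its iterated parents. -/
def P (m : ℕ) (g r : ℕ → ℝ) (i : ℕ) : Set ℕ :=
  {z | Relation.ReflTransGen (pstep m g r) i z}

/-- `A i`: the set of nodes in the tree rooted at `i`,
i.e. all `z ∈ M` having `i` as an ancestor (or equal to `i`). -/
def A (m : ℕ) (g r : ℕ → ℝ) (i : ℕ) : Set ℕ :=
  {z | 1 ≤ z ∧ z ≤ m ∧ i ∈ P m g r z}

/-- `v i`: the lowest-indexed node in the tree rooted at `i`. -/
def v (m : ℕ) (g r : ℕ → ℝ) (i : ℕ) : ℕ := sInf (A m g r i)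

/-- `y i`: the younger siblings of `i` (same parent status, smaller index). -/
def y (m : ℕ) (g r : ℕ → ℝ) (i : ℕ) : Set ℕ :=
  {z | 1 ≤ z ∧ z ≤ m ∧ z < i ∧ p m g r z = p m g r i}

/-- `esib i`: the elder siblings of `i`. -/
def esib (m : ℕ) (g r : ℕ → ℝ) (i : ℕ) : Set ℕ :=
  {z | 1 ≤ z ∧ z ≤ m ∧ i < z ∧ p m g r z = p m g r i}

/-- `T k := {k} ∪ ⋃_{z ∈ P(k)} y(z)`. -/
def T (m : ℕ) (g r : ℕ → ℝ) (k : ℕ) : Set ℕ :=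
  {k} ∪ ⋃ z ∈ P m g r k, y m g r z

/-- `T k` as a `Finset` (all relevant nodes lie in `{k} ∪ [1, m]`). -/
def TIcc (m : ℕ) (g r : ℕ → ℝ) (k : ℕ) : Finset ℕ :=
  (insert k (Finset.Icc 1 m)).filter (fun z => z ∈ T m g r k)

/-! ### Jobs and one-shot scheduling -/

variable {ι : Type*}

/-- The exact machine type of a job `J`: the least `z ∈ M` with `s J ≤ g z`. -/
def mty (m : ℕ) (g : ℕ → ℝ) (s : ι → ℝ) (J : ι) : ℕ :=
  sInf {z | 1 ≤ z ∧ z ≤ m ∧ s J ≤ g z}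

/-- Total size of a finite set of jobs. -/
def Ssum (s : ι → ℝ) (W : Finset ι) : ℝ := ∑ J ∈ W, s J

/-- `k0f X`: the highest-indexed exact machine type among the jobs of `X`. -/
def k0f (m : ℕ) (g : ℕ → ℝ) (s : ι → ℝ) (X : Finset ι) : ℕ :=
  X.sup (fun J => mty m g s J)

/-- `H z X`: the jobs of `X` whose exact machine type lies in the tree rooted at `z`. -/
def H (m : ℕ) (g r : ℕ → ℝ) (s : ι → ℝ) (z : ℕ) (X : Finset ι) : Finset ι :=
  X.filter (fun J => mty m g s J ∈ A m g r z)

/-- `SH X z := S(H_z(X))`. -/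
def SH (m : ℕ) (g r : ℕ → ℝ) (s : ι → ℝ) (X : Finset ι) (z : ℕ) : ℝ :=
  Ssum s (H m g r s z X)

/-- Feasibility of a machine configuration `w : M → ℕ` for the job set `X`. -/
def Feasible (m : ℕ) (g : ℕ → ℝ) (s : ι → ℝ) (X : Finset ι) (w : ℕ → ℕ) : Prop :=
  ∀ i, 1 ≤ i → i ≤ m →
    Ssum s (X.filter (fun J => i ≤ mty m g s J)) ≤ ∑ z ∈ Finset.Icc i m, (w z : ℝ) * g z

/-- The cost of a machine configuration. -/
def cost (m : ℕ) (r : ℕ → ℝ) (w : ℕ → ℕ) : ℝ :=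
  ∑ z ∈ Finset.Icc 1 m, (w z : ℝ) * r z

/-- The optimal one-shot scheduling cost for a job set `X`. -/
def OPT1 (m : ℕ) (g r : ℕ → ℝ) (s : ι → ℝ) (X : Finset ι) : ℝ :=
  sInf {c : ℝ | ∃ w : ℕ → ℕ, Feasible m g s X w ∧ c = cost m r w}

/-- The fractional machine configuration `cn_{z*}` for the job set `X`, with
highest-indexed machine type `zs`.  A node `i ∈ T(zs) \ {zs}` is the boundary
type `i*` exactly when `∑_{z ∈ T(zs), z > i} S(H_z) ≤ cn(zs)·g(zs) <
∑_{z ∈ T(zs), z ≥ i} S(H_z)`; nodes above the boundary get `0`,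
nodes below it get `S(H_i)/g_i`. -/
def cn (m : ℕ) (g r : ℕ → ℝ) (s : ι → ℝ) (X : Finset ι) (zs i : ℕ) : ℝ :=
  let B : ℝ := (⌈SH m g r s X zs / g zs⌉₊ : ℝ) * g zs
  let Sge : ℝ := ∑ z ∈ (TIcc m g r zs).filter (fun z => i ≤ z), SH m g r s X z
  let Sgt : ℝ := ∑ z ∈ (TIcc m g r zs).filter (fun z => i < z), SH m g r s X z
  if i = zs then (⌈SH m g r s X zs / g zs⌉₊ : ℝ)
  else if i ∈ T m g r zs then
    (if Sgt ≤ B ∧ B < Sge then (Sge - B) / g i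
     else if B < Sgt then SH m g r s X i / g i
     else 0)
  else 0

/-- `cn_{zs}` is decent: for every strict ancestor `zt` of `zs`, the total cost of
the machines of types in `T(zs) ∩ A(zt)` is at most the cost of one type-`zt` machine. -/
def decent (m : ℕ) (g r : ℕ → ℝ) (s : ι → ℝ) (X : Finset ι) (zs : ℕ) : Prop :=
  ∀ zt ∈ P m g r zs, zt ≠ zs →
    (∑ z ∈ (TIcc m g r zs).filter (fun z => z ∈ A m g r zt), cn m g r s X zs z * r z) ≤ r zt

/-- `z⋄(X)`: the least `z* ∈ P(k0(X))` such that `cn_{z*}` is decent. -/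
def zdia (m : ℕ) (g r : ℕ → ℝ) (s : ι → ℝ) (X : Finset ι) : ℕ :=
  sInf {zs | zs ∈ P m g r (k0f m g s X) ∧ decent m g r s X zs}

/-- The child of `zd` whose subtree contains node `k`. -/
def chil (m : ℕ) (g r : ℕ → ℝ) (zd k : ℕ) : ℕ :=
  sInf {i | p m g r i = zd ∧ k ∈ A m g r i}

/-- The node `i ∈ T(zd)` whose subtree contains node `k`. -/
def idxT (m : ℕ) (g r : ℕ → ℝ) (zd k : ℕ) : ℕ :=
  sInf {i | i ∈ T m g r zd ∧ k ∈ A m g r i}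

/-- The children `f(zd)` of node `zd`, as a `Finset`. -/
def fchFin (m : ℕ) (g r : ℕ → ℝ) (zd : ℕ) : Finset ℕ :=
  (Finset.Icc 1 m).filter (fun z => p m g r z = zd)

/-- The cost `r̃(X)(J)` charged to the job `J` of the job set `X`. -/
def charge (m : ℕ) (g r : ℕ → ℝ) (s : ι → ℝ) (X : Finset ι) (J : ι) : ℝ :=
  let zd := zdia m g r s X
  let ρ : ℕ → ℝ := fun i => r i / g i
  let Hh := X.filter (fun J' => mty m g s J' = zd)
  let c : ℝ := Ssum s Hh * ρ zd + ∑ i ∈ fchFin m g r zd, SH m g r s X i * ρ i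
  if mty m g s J ∈ A m g r zd then
    if g zd ≤ SH m g r s X zd then s J * ρ zd
    else if r zd < c then
      if mty m g s J = zd then s J * ρ zd
      else
        s J * (ρ (chil m g r zd (mty m g s J)) -
          (ρ (chil m g r zd (mty m g s J)) - ρ zd) *
            ((c - r zd) /
              (∑ i ∈ fchFin m g r zd, ∑ J' ∈ H m g r s i X, s J' * (ρ i - ρ zd))))
    else
      if mty m g s J = zd then s J * ρ zd * (1 + (r zd - c) / (Ssum s Hh * ρ zd))
      else s J * ρ (chil m g r zd (mty m g s J))
  else s J * ρ (idxT m g r zd (mty m g s J))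

/-! ### Jobs with active intervals -/

/-- `span(X) := ⋃_{J ∈ X} [Ilo J, Ihi J)`. -/
def spanSet (Ilo Ihi : ι → ℝ) (X : Finset ι) : Set ℝ :=
  ⋃ J ∈ X, Set.Ico (Ilo J) (Ihi J)

/-- `X(t)`: the jobs of `X` active at time `t`. -/
def activeJ (Ilo Ihi : ι → ℝ) (X : Finset ι) (t : ℝ) : Finset ι :=
  X.filter (fun J => Ilo J ≤ t ∧ t < Ihi J)

/-- `X(t) ∪ ℋ(t)` where `ℋ = {F_d(J) : J ∈ X}`: the original jobs are embedded
via `Sum.inl`, and the artificial job `F_d(J)` (with size `s J` and active set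
`[Ihi J, Ihi J + d) ∩ span(X)`) is represented by `Sum.inr J`. -/
def activeJH (Ilo Ihi : ι → ℝ) (X : Finset ι) (d t : ℝ) : Finset (ι ⊕ ι) :=
  (X.image Sum.inl ∪ X.image Sum.inr).filter
    (fun x => Sum.elim
      (fun J => Ilo J ≤ t ∧ t < Ihi J)
      (fun J => (Ihi J ≤ t ∧ t < Ihi J + d) ∧ t ∈ spanSet Ilo Ihi X) x)

end

end BSHM

namespace BSHM

section Aux

variable {ι κ : Type*} {m : ℕ} {g r : ℕ → ℝ} {s : ι → ℝ}

lemma cost_nonneg (hr : ∀ z ∈ Finset.Icc 1 m, 0 ≤ r z) (w : ℕ → ℕ) :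
    0 ≤ cost m r w :=
  Finset.sum_nonneg fun z hz => mul_nonneg (Nat.cast_nonneg _) (hr z hz)

lemma OPT1_bddBelow (hr : ∀ z ∈ Finset.Icc 1 m, 0 ≤ r z) (X : Finset ι) :
    BddBelow {c : ℝ | ∃ w : ℕ → ℕ, Feasible m g s X w ∧ c = cost m r w} :=
  ⟨0, by rintro c ⟨w, _, rfl⟩; exact cost_nonneg hr w⟩

lemma OPT1_nonneg (hr : ∀ z ∈ Finset.Icc 1 m, 0 ≤ r z) (X : Finset ι) :
    0 ≤ OPT1 m g r s X :=
  Real.sInf_nonneg (by rintro c ⟨w, _, rfl⟩; exact cost_nonneg hr w)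

lemma feasible_exists (hm : 1 ≤ m) (hgm : 0 < g m) (X : Finset ι)
    (hs : ∀ J ∈ X, 0 ≤ s J) :
    ∃ w : ℕ → ℕ, Feasible m g s X w := by
  refine ⟨fun z => if z = m then ⌈Ssum s X / g m⌉₊ else 0, ?_⟩
  intro i hi him
  have h1 : Ssum s (X.filter (fun J => i ≤ mty m g s J)) ≤ Ssum s X :=
    Finset.sum_le_sum_of_subset_of_nonneg (Finset.filter_subset _ _)
      (fun J hJ _ => hs J hJ)
  have h2 : Ssum s X ≤ (⌈Ssum s X / g m⌉₊ : ℝ) * g m := by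
    have hle := Nat.le_ceil (Ssum s X / g m)
    calc Ssum s X = Ssum s X / g m * g m := by field_simp
    _ ≤ _ := mul_le_mul_of_nonneg_right hle hgm.le
  have h3 : ∑ z ∈ Finset.Icc i m,
      ((if z = m then (⌈Ssum s X / g m⌉₊ : ℕ) else 0 : ℕ) : ℝ) * g z
      = (⌈Ssum s X / g m⌉₊ : ℝ) * g m := by
    rw [Finset.sum_eq_single_of_mem m (Finset.mem_Icc.2 ⟨him, le_refl m⟩)]
    · simp
    · intro b _ hb; simp [hb]
  rw [h3]; linarith

lemma OPT1_nonempty_set (hm : 1 ≤ m) (hgm : 0 < g m) (X : Finset ι)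
    (hs : ∀ J ∈ X, 0 ≤ s J) :
    {c : ℝ | ∃ w : ℕ → ℕ, Feasible m g s X w ∧ c = cost m r w}.Nonempty := by
  obtain ⟨w, hw⟩ := feasible_exists hm hgm X hs
  exact ⟨cost m r w, w, hw, rfl⟩

lemma OPT1_empty (hr : ∀ z ∈ Finset.Icc 1 m, 0 ≤ r z) :
    OPT1 m g r s (∅ : Finset ι) = 0 := by
  have h0 : (0 : ℝ) ∈ {c : ℝ | ∃ w : ℕ → ℕ, Feasible m g s (∅ : Finset ι) w ∧ c = cost m r w} :=
    ⟨fun _ => 0, fun i _ _ => by simp [Ssum], by simp [cost]⟩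
  refine le_antisymm (csInf_le (OPT1_bddBelow hr _) h0) ?_
  exact le_csInf ⟨0, h0⟩ (by rintro c ⟨w, _, rfl⟩; exact cost_nonneg hr w)

lemma OPT1_mono (hm : 1 ≤ m) (hgm : 0 < g m) (hr : ∀ z ∈ Finset.Icc 1 m, 0 ≤ r z)
    {X Y : Finset ι} (hXY : X ⊆ Y) (hs : ∀ J ∈ Y, 0 ≤ s J) :
    OPT1 m g r s X ≤ OPT1 m g r s Y := by
  refine csInf_le_csInf (OPT1_bddBelow hr X) (OPT1_nonempty_set hm hgm Y hs) ?_
  rintro c ⟨w, hw, rfl⟩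
  refine ⟨w, fun i h1 h2 => le_trans ?_ (hw i h1 h2), rfl⟩
  exact Finset.sum_le_sum_of_subset_of_nonneg
    (Finset.filter_subset_filter _ hXY)
    (fun J hJ _ => hs J (Finset.mem_filter.1 hJ).1)

lemma OPT1_union_le [DecidableEq ι] (hm : 1 ≤ m) (hgm : 0 < g m) (hr : ∀ z ∈ Finset.Icc 1 m, 0 ≤ r z)
    {X Y : Finset ι} (hsX : ∀ J ∈ X, 0 ≤ s J) (hsY : ∀ J ∈ Y, 0 ≤ s J) :
    OPT1 m g r s (X ∪ Y) ≤ OPT1 m g r s X + OPT1 m g r s Y := by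
  classical
  have key : ∀ b ∈ {c : ℝ | ∃ w, Feasible m g s X w ∧ c = cost m r w},
      ∀ c ∈ {c : ℝ | ∃ w, Feasible m g s Y w ∧ c = cost m r w},
      OPT1 m g r s (X ∪ Y) ≤ b + c := by
    rintro _ ⟨w1, hw1, rfl⟩ _ ⟨w2, hw2, rfl⟩
    have hfeas : Feasible m g s (X ∪ Y) (fun z => w1 z + w2 z) := by
      intro i h1 h2
      have hU : Ssum s ((X ∪ Y).filter (fun J => i ≤ mty m g s J)) ≤
          Ssum s (X.filter (fun J => i ≤ mty m g s J)) +
          Ssum s (Y.filter (fun J => i ≤ mty m g s J)) := by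
        rw [Finset.filter_union]
        have := Finset.sum_union_inter (s₁ := X.filter (fun J => i ≤ mty m g s J))
          (s₂ := Y.filter (fun J => i ≤ mty m g s J)) (f := s)
        have hint : 0 ≤ ∑ J ∈ (X.filter (fun J => i ≤ mty m g s J)) ∩
            (Y.filter (fun J => i ≤ mty m g s J)), s J :=
          Finset.sum_nonneg fun J hJ =>
            hsX J (Finset.mem_filter.1 (Finset.mem_inter.1 hJ).1).1
        unfold Ssum
        linarith
      have hsum : ∑ z ∈ Finset.Icc i m, ((w1 z + w2 z : ℕ) : ℝ) * g z =
          (∑ z ∈ Finset.Icc i m, (w1 z : ℝ) * g z) +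
          ∑ z ∈ Finset.Icc i m, (w2 z : ℝ) * g z := by
        rw [← Finset.sum_add_distrib]; congr 1; funext z; push_cast; ring
      rw [hsum]
      exact le_trans hU (add_le_add (hw1 i h1 h2) (hw2 i h1 h2))
    have hcost : cost m r (fun z => w1 z + w2 z) = cost m r w1 + cost m r w2 := by
      unfold cost; rw [← Finset.sum_add_distrib]; congr 1; funext z; push_cast; ring
    calc OPT1 m g r s (X ∪ Y) ≤ cost m r (fun z => w1 z + w2 z) :=
          csInf_le (OPT1_bddBelow hr _) ⟨_, hfeas, rfl⟩
    _ = cost m r w1 + cost m r w2 := hcost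
  have hBne := OPT1_nonempty_set (r := r) hm hgm X hsX
  have hCne := OPT1_nonempty_set (r := r) hm hgm Y hsY
  have h1 : ∀ b ∈ {c : ℝ | ∃ w, Feasible m g s X w ∧ c = cost m r w},
      OPT1 m g r s (X ∪ Y) - b ≤ OPT1 m g r s Y := by
    intro b hb
    exact le_csInf hCne (fun c hc => by linarith [key b hb c hc])
  have h2 : OPT1 m g r s (X ∪ Y) - OPT1 m g r s Y ≤ OPT1 m g r s X :=
    le_csInf hBne (fun b hb => by linarith [h1 b hb])
  linarith

lemma OPT1_relabel [DecidableEq κ] {f : ι → κ} (hf : Function.Injective f) {s' : κ → ℝ}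
    (hss : ∀ J, s' (f J) = s J) (X : Finset ι) :
    OPT1 m g r s' (X.image f) = OPT1 m g r s X := by
  classical
  have hmty : ∀ J : ι, mty m g s' (f J) = mty m g s J := by
    intro J; unfold mty; rw [hss]
  have hSsum : ∀ i : ℕ, Ssum s' ((X.image f).filter (fun x => i ≤ mty m g s' x)) =
      Ssum s (X.filter (fun J => i ≤ mty m g s J)) := by
    intro i
    rw [Finset.filter_image]
    unfold Ssum
    rw [Finset.sum_image (fun a _ b _ h => hf h)]
    apply Finset.sum_congr
    · apply Finset.filter_congr; intro J _; simp [hmty]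
    · intro J _; exact hss J
  have hfeas : ∀ w, Feasible m g s' (X.image f) w ↔ Feasible m g s X w := by
    intro w
    unfold Feasible
    constructor <;> intro h i h1 h2
    · rw [← hSsum]; exact h i h1 h2
    · rw [hSsum]; exact h i h1 h2
  unfold OPT1
  congr 1
  ext c
  simp only [Set.mem_setOf_eq, hfeas]

lemma OPT1_biUnion_le [DecidableEq ι] (hm : 1 ≤ m) (hgm : 0 < g m)
    (hr : ∀ z ∈ Finset.Icc 1 m, 0 ≤ r z)
    (idx : Finset κ) (f : κ → Finset ι)
    (hs : ∀ k ∈ idx, ∀ J ∈ f k, 0 ≤ s J) :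
    OPT1 m g r s (idx.biUnion f) ≤ ∑ k ∈ idx, OPT1 m g r s (f k) := by
  induction idx using Finset.induction_on with
  | empty => simp [OPT1_empty hr]
  | @insert a t ha ih =>
    rw [Finset.biUnion_insert, Finset.sum_insert ha]
    have hsa : ∀ J ∈ f a, 0 ≤ s J := hs a (Finset.mem_insert_self a t)
    have hst : ∀ J ∈ t.biUnion f, 0 ≤ s J := by
      intro J hJ
      obtain ⟨k, hk, hJk⟩ := Finset.mem_biUnion.1 hJ
      exact hs k (Finset.mem_insert_of_mem hk) J hJk
    exact le_trans (OPT1_union_le (r := r) hm hgm hr hsa hst)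
      (add_le_add_right (ih (fun k hk => hs k (Finset.mem_insert_of_mem hk))) _)


open MeasureTheory in
lemma integrable_filter_comp (U : Finset κ) (P : κ → ℝ → Prop)
    (φ : Finset κ → ℝ) (f : ℝ → ℝ)
    (hfeq : ∀ t, f t = φ (U.filter (fun x => P x t)))
    (hφ0 : φ ∅ = 0)
    (hmeas : ∀ x ∈ U, MeasurableSet {t : ℝ | P x t})
    (hfin : ∀ x ∈ U, volume {t : ℝ | P x t} < ⊤) :
    Integrable f := by
  rw [show f = fun t => φ (U.filter (fun x => P x t)) from funext hfeq]
  have hrep : (fun t => φ (U.filter (fun x => P x t))) =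
      fun t => ∑ W ∈ U.powerset,
        Set.indicator {t' : ℝ | U.filter (fun x => P x t') = W} (fun _ => φ W) t := by
    funext t
    rw [Finset.sum_eq_single_of_mem (U.filter (fun x => P x t))
        (Finset.mem_powerset.2 (Finset.filter_subset _ _))]
    · rw [Set.indicator_of_mem]; exact rfl
    · intro W _ hne
      exact Set.indicator_of_notMem (fun h => hne (h.symm)) _
  rw [hrep]
  apply integrable_finset_sum
  intro W hW
  by_cases hWe : W = ∅
  · subst hWe
    simp only [hφ0]
    simp
  · obtain ⟨x0, hx0⟩ := Finset.nonempty_iff_ne_empty.2 hWe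
    have hx0U : x0 ∈ U := Finset.mem_powerset.1 hW hx0
    have hAmeas : MeasurableSet {t : ℝ | U.filter (fun x => P x t) = W} := by
      have hset : {t : ℝ | U.filter (fun x => P x t) = W} =
          ⋂ x ∈ (U : Set κ), {t | P x t ↔ x ∈ W} := by
        ext t
        simp only [Set.mem_setOf_eq, Set.mem_iInter, Finset.mem_coe]
        constructor
        · rintro rfl x hx
          simp [Finset.mem_filter, hx]
        · intro h
          ext x
          by_cases hx : x ∈ U
          · simp [Finset.mem_filter, hx, h x hx]
          · simp only [Finset.mem_filter]
            exact iff_of_false (fun h' => hx h'.1)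
              (fun h' => hx (Finset.mem_powerset.1 hW h'))
      rw [hset]
      refine MeasurableSet.biInter U.countable_toSet (fun x hx => ?_)
      by_cases hxW : x ∈ W
      · have : {t : ℝ | P x t ↔ x ∈ W} = {t | P x t} := by ext; simp [hxW]
        rw [this]; exact hmeas x hx
      · have : {t : ℝ | P x t ↔ x ∈ W} = {t | P x t}ᶜ := by ext; simp [hxW]
        rw [this]; exact (hmeas x hx).compl
    have hsub : {t : ℝ | U.filter (fun x => P x t) = W} ⊆ {t | P x0 t} := by
      intro t ht
      have hmem : x0 ∈ U.filter (fun x => P x t) := by rw [ht]; exact hx0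
      exact (Finset.mem_filter.1 hmem).2
    refine (integrable_indicator_iff hAmeas).2 ?_
    exact integrableOn_const
      (lt_of_le_of_lt (measure_mono hsub) (hfin x0 hx0U)).ne

end Aux

/-- There exists a constant `C > 0` such that, for every
instance (machine types with power-of-8 cost rates, nonempty finite job set with
sizes in `(0, g m]` and active-interval lengths in `[1, μ]`, and any `d ≥ μ`):
`∫_{t ∈ span(𝒥)} OPT1(𝒥(t) ∪ ℋ(t)) dt ≤ C·d·∫_{t ∈ span(𝒥)} OPT1(𝒥(t)) dt`. -/
theorem statement_17 :
    ∃ C : ℝ, 0 < C ∧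
      ∀ (m : ℕ) (g r : ℕ → ℝ),
        1 ≤ m → 0 < g 1 → 0 < r 1 →
        (∀ i j, 1 ≤ i → i < j → j ≤ m → g i < g j) →
        (∀ i j, 1 ≤ i → i < j → j ≤ m → r i < r j) →
        (∀ z, 1 ≤ z → z ≤ m → ∃ n : ℤ, r z = (8 : ℝ) ^ n) →
        ∀ (ι : Type) (s Ilo Ihi : ι → ℝ) (𝒥 : Finset ι) (μ d : ℝ),
          𝒥.Nonempty →
          (∀ J ∈ 𝒥, 0 < s J ∧ s J ≤ g m) →
          1 ≤ μ →
          (∀ J ∈ 𝒥, 1 ≤ Ihi J - Ilo J ∧ Ihi J - Ilo J ≤ μ) →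
          μ ≤ d →
          (∫ t in spanSet Ilo Ihi 𝒥,
              OPT1 m g r (Sum.elim s s) (activeJH Ilo Ihi 𝒥 d t))
            ≤ C * d *
              ∫ t in spanSet Ilo Ihi 𝒥, OPT1 m g r s (activeJ Ilo Ihi 𝒥 t) := by
  refine ⟨6, by norm_num, ?_⟩
  intro m g r hm hg1 hr1 hgmono hrmono _hr8 ι s Ilo Ihi 𝒥 μ d hne hs hμ hlen hμd
  haveI : DecidableEq ι := Classical.decEq ι
  have hd1 : (1 : ℝ) ≤ d := le_trans hμ hμd
  have hd0 : (0 : ℝ) ≤ d := by linarith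
  have hgm : 0 < g m := by
    rcases lt_or_eq_of_le hm with h | h
    · exact hg1.trans (hgmono 1 m le_rfl h le_rfl)
    · rw [← h]; exact hg1
  have hrpos : ∀ z ∈ Finset.Icc 1 m, 0 ≤ r z := by
    intro z hz
    obtain ⟨h1, h2⟩ := Finset.mem_Icc.1 hz
    rcases lt_or_eq_of_le h1 with h | h
    · exact (hr1.trans (hrmono 1 z le_rfl h h2)).le
    · rw [← h]; exact hr1.le
  have hs0 : ∀ J ∈ 𝒥, 0 ≤ s J := fun J hJ => (hs J hJ).1.le
  set F : ℝ → ℝ := fun t => OPT1 m g r s (activeJ Ilo Ihi 𝒥 t) with hFdef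
  set G : ℝ → ℝ := fun t => OPT1 m g r (Sum.elim s s) (activeJH Ilo Ihi 𝒥 d t) with hGdef
  set K : ℕ := 2 * ⌈d⌉₊ + 2 with hKdef
  -- measurability of the span
  have hspan_meas : MeasurableSet (spanSet Ilo Ihi 𝒥) :=
    Finset.measurableSet_biUnion _ (fun J _ => measurableSet_Ico)
  have hFnonneg : ∀ t, 0 ≤ F t := by
    intro t; simp only [hFdef]; exact OPT1_nonneg hrpos _
  have hIF_nonneg : 0 ≤ ∫ t in spanSet Ilo Ihi 𝒥, F t :=
    setIntegral_nonneg hspan_meas (fun t _ => hFnonneg t)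
  -- integrability of F
  have hFint : Integrable F := by
    refine integrable_filter_comp (κ := ι) 𝒥
      (fun J t => Ilo J ≤ t ∧ t < Ihi J) (fun W => OPT1 m g r s W) F
      (fun t => by
        simp only [hFdef]
        congr 1
        ext J
        simp [activeJ, Finset.mem_filter])
      (OPT1_empty hrpos)
      (fun J _ => show MeasurableSet (Set.Ico (Ilo J) (Ihi J)) from measurableSet_Ico)
      (fun J _ => show volume (Set.Ico (Ilo J) (Ihi J)) < ⊤ from measure_Ico_lt_top)
  have hFcint : ∀ c : ℝ, Integrable (fun t => F (t - c)) :=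
    fun c => hFint.comp_sub_right c
  -- integrability of G
  have hGint : Integrable G := by
    refine integrable_filter_comp (κ := ι ⊕ ι) (𝒥.image Sum.inl ∪ 𝒥.image Sum.inr)
      (fun x t => Sum.elim
        (fun J => Ilo J ≤ t ∧ t < Ihi J)
        (fun J => (Ihi J ≤ t ∧ t < Ihi J + d) ∧ t ∈ spanSet Ilo Ihi 𝒥) x)
      (fun W => OPT1 m g r (Sum.elim s s) W) G
      (fun t => by
        simp only [hGdef]
        congr 1
        ext x
        simp [activeJH, Finset.mem_filter])
      (OPT1_empty hrpos)
      (fun x _ => by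
        cases x with
        | inl J => exact show MeasurableSet (Set.Ico (Ilo J) (Ihi J)) from measurableSet_Ico
        | inr J =>
          exact show MeasurableSet (Set.Ico (Ihi J) (Ihi J + d) ∩ spanSet Ilo Ihi 𝒥) from
            measurableSet_Ico.inter hspan_meas)
      (fun x _ => by
        cases x with
        | inl J => exact show volume (Set.Ico (Ilo J) (Ihi J)) < ⊤ from measure_Ico_lt_top
        | inr J =>
          refine lt_of_le_of_lt (measure_mono ?_)
            (measure_Ico_lt_top (a := Ihi J) (b := Ihi J + d))
          intro t ht
          exact ht.1)
  -- F vanishes off the span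
  have hFoff : ∀ t, t ∉ spanSet Ilo Ihi 𝒥 → F t = 0 := by
    intro t ht
    have hempty : activeJ Ilo Ihi 𝒥 t = ∅ := by
      rw [Finset.eq_empty_iff_forall_notMem]
      intro J hJ
      obtain ⟨hJ𝒥, h1, h2⟩ := Finset.mem_filter.1 hJ
      exact ht (Set.mem_biUnion hJ𝒥 ⟨h1, h2⟩)
    simp only [hFdef]
    rw [hempty]
    exact OPT1_empty hrpos
  -- pointwise bound
  have hpt : ∀ t, G t ≤ F t + ∑ j ∈ Finset.Icc 2 K, F (t - (j : ℝ) / 2) := by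
    intro t
    set Frm : Finset ι :=
      𝒥.filter (fun J => (Ihi J ≤ t ∧ t < Ihi J + d) ∧ t ∈ spanSet Ilo Ihi 𝒥) with hFrm
    have hdecomp : activeJH Ilo Ihi 𝒥 d t =
        ((activeJ Ilo Ihi 𝒥 t).image Sum.inl) ∪ (Frm.image Sum.inr) := by
      ext x
      cases x with
      | inl J =>
        simp only [activeJH, activeJ, hFrm, Finset.mem_filter, Finset.mem_union,
          Finset.mem_image, Sum.elim_inl, Sum.inl.injEq, Sum.inr.injEq]
        constructor
        · rintro ⟨(⟨a, ha, h⟩ | ⟨a, ha, h⟩), h2⟩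
          · exact Or.inl ⟨J, ⟨h ▸ ha, h2⟩, rfl⟩
          · exact absurd h (by simp)
        · rintro (⟨a, ⟨ha, h2⟩, rfl⟩ | ⟨a, _, h⟩)
          · exact ⟨Or.inl ⟨a, ha, rfl⟩, h2⟩
          · exact absurd h (by simp)
      | inr J =>
        simp only [activeJH, activeJ, hFrm, Finset.mem_filter, Finset.mem_union,
          Finset.mem_image, Sum.elim_inr, Sum.inl.injEq, Sum.inr.injEq]
        constructor
        · rintro ⟨(⟨a, ha, h⟩ | ⟨a, ha, h⟩), h2⟩
          · exact absurd h (by simp)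
          · exact Or.inr ⟨J, ⟨h ▸ ha, h2⟩, rfl⟩
        · rintro (⟨a, _, h⟩ | ⟨a, ⟨ha, h2⟩, rfl⟩)
          · exact absurd h (by simp)
          · exact ⟨Or.inr ⟨a, ha, rfl⟩, h2⟩
    have hAl : ∀ x ∈ (activeJ Ilo Ihi 𝒥 t).image Sum.inl, 0 ≤ Sum.elim s s x := by
      rintro x hx
      obtain ⟨J, hJ, rfl⟩ := Finset.mem_image.1 hx
      exact hs0 J (Finset.mem_filter.1 hJ).1
    have hAr : ∀ x ∈ Frm.image Sum.inr, 0 ≤ Sum.elim s s x := by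
      rintro x hx
      obtain ⟨J, hJ, rfl⟩ := Finset.mem_image.1 hx
      exact hs0 J (Finset.mem_filter.1 hJ).1
    have hstep1 : G t ≤ F t + OPT1 m g r s Frm := by
      simp only [hGdef, hFdef]
      rw [hdecomp]
      refine le_trans (OPT1_union_le hm hgm hrpos hAl hAr) ?_
      rw [OPT1_relabel (s' := Sum.elim s s) (s := s) Sum.inl_injective (fun J => rfl),
        OPT1_relabel (s' := Sum.elim s s) (s := s) Sum.inr_injective (fun J => rfl)]
    refine le_trans hstep1 (add_le_add_right ?_ (F t))
    -- cover the frame jobs by shifted active sets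
    have hsubset : Frm ⊆ (Finset.Icc 2 K).biUnion
        (fun j => activeJ Ilo Ihi 𝒥 (t - (j : ℝ) / 2)) := by
      intro J hJ
      obtain ⟨hJ𝒥, ⟨hts, htd⟩, _⟩ := Finset.mem_filter.1 hJ
      have hx0 : (0 : ℝ) ≤ 2 * (t - Ihi J) + 2 := by linarith
      set j : ℕ := ⌊2 * (t - Ihi J) + 2⌋₊ with hjdef
      have hj2 : 2 ≤ j := Nat.le_floor (by push_cast; linarith)
      have hjx : (j : ℝ) ≤ 2 * (t - Ihi J) + 2 := Nat.floor_le hx0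
      have hxj : 2 * (t - Ihi J) + 2 - 1 < (j : ℝ) := Nat.sub_one_lt_floor _
      have hjK : j ≤ K := by
        have hdceil : d ≤ (⌈d⌉₊ : ℝ) := Nat.le_ceil d
        have hlt : (j : ℝ) < (K : ℝ) := by
          rw [hKdef]; push_cast; linarith
        exact_mod_cast hlt.le
      refine Finset.mem_biUnion.2 ⟨j, Finset.mem_Icc.2 ⟨hj2, hjK⟩, ?_⟩
      refine Finset.mem_filter.2 ⟨hJ𝒥, ?_, ?_⟩
      · have hlen1 := (hlen J hJ𝒥).1
        linarith
      · linarith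
    have hbi : ∀ k ∈ Finset.Icc 2 K, ∀ J ∈ activeJ Ilo Ihi 𝒥 (t - (k : ℝ) / 2), 0 ≤ s J :=
      fun k _ J hJ => hs0 J (Finset.mem_filter.1 hJ).1
    have hbiall : ∀ J ∈ (Finset.Icc 2 K).biUnion
        (fun j => activeJ Ilo Ihi 𝒥 (t - (j : ℝ) / 2)), 0 ≤ s J := by
      intro J hJ
      obtain ⟨k, hk, hJk⟩ := Finset.mem_biUnion.1 hJ
      exact hbi k hk J hJk
    exact le_trans (OPT1_mono hm hgm hrpos hsubset hbiall)
      (OPT1_biUnion_le hm hgm hrpos _ _ hbi)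
  -- put the integrals together
  have hsum_int : Integrable (fun t => ∑ j ∈ Finset.Icc 2 K, F (t - (j : ℝ) / 2)) :=
    integrable_finset_sum _ (fun j _ => hFcint _)
  have step1 : (∫ t in spanSet Ilo Ihi 𝒥, G t) ≤
      ∫ t in spanSet Ilo Ihi 𝒥, (F t + ∑ j ∈ Finset.Icc 2 K, F (t - (j : ℝ) / 2)) :=
    setIntegral_mono_on hGint.integrableOn (hFint.add hsum_int).integrableOn
      hspan_meas (fun t _ => hpt t)
  have step2 : (∫ t in spanSet Ilo Ihi 𝒥,
        (F t + ∑ j ∈ Finset.Icc 2 K, F (t - (j : ℝ) / 2))) =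
      (∫ t in spanSet Ilo Ihi 𝒥, F t) +
        ∑ j ∈ Finset.Icc 2 K, ∫ t in spanSet Ilo Ihi 𝒥, F (t - (j : ℝ) / 2) := by
    rw [integral_add hFint.integrableOn hsum_int.integrableOn,
      integral_finset_sum _ (fun j _ => (hFcint _).integrableOn)]
  have step3 : ∀ c : ℝ, (∫ t in spanSet Ilo Ihi 𝒥, F (t - c)) ≤
      ∫ t in spanSet Ilo Ihi 𝒥, F t := by
    intro c
    calc (∫ t in spanSet Ilo Ihi 𝒥, F (t - c)) ≤ ∫ t, F (t - c) :=
          setIntegral_le_integral (hFcint c)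
            (Filter.Eventually.of_forall (fun t => hFnonneg _))
    _ = ∫ t, F t := integral_sub_right_eq_self F c
    _ = ∫ t in spanSet Ilo Ihi 𝒥, F t :=
          (setIntegral_eq_integral_of_forall_compl_eq_zero hFoff).symm
  have hcard : ((Finset.Icc 2 K).card : ℝ) = (K : ℝ) - 1 := by
    rw [Nat.card_Icc]
    have h2K : 2 ≤ K + 1 := by omega
    rw [Nat.cast_sub h2K]
    push_cast
    ring
  have hsum_le : (∑ j ∈ Finset.Icc 2 K, ∫ t in spanSet Ilo Ihi 𝒥, F (t - (j : ℝ) / 2)) ≤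
      ((K : ℝ) - 1) * ∫ t in spanSet Ilo Ihi 𝒥, F t := by
    calc (∑ j ∈ Finset.Icc 2 K, ∫ t in spanSet Ilo Ihi 𝒥, F (t - (j : ℝ) / 2)) ≤
        ∑ _j ∈ Finset.Icc 2 K, ∫ t in spanSet Ilo Ihi 𝒥, F t :=
          Finset.sum_le_sum (fun j _ => step3 ((j : ℝ) / 2))
    _ = ((Finset.Icc 2 K).card : ℝ) * ∫ t in spanSet Ilo Ihi 𝒥, F t := by
          rw [Finset.sum_const, nsmul_eq_mul]
    _ = ((K : ℝ) - 1) * ∫ t in spanSet Ilo Ihi 𝒥, F t := by rw [hcard]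
  have hKle : (K : ℝ) ≤ 6 * d := by
    have hceil : (⌈d⌉₊ : ℝ) < d + 1 := Nat.ceil_lt_add_one hd0
    rw [hKdef]; push_cast; linarith
  calc (∫ t in spanSet Ilo Ihi 𝒥, G t) ≤
      (∫ t in spanSet Ilo Ihi 𝒥, F t) +
        ∑ j ∈ Finset.Icc 2 K, ∫ t in spanSet Ilo Ihi 𝒥, F (t - (j : ℝ) / 2) := by
        rw [← step2]; exact step1
  _ ≤ (∫ t in spanSet Ilo Ihi 𝒥, F t) + ((K : ℝ) - 1) * ∫ t in spanSet Ilo Ihi 𝒥, F t :=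
        add_le_add_right hsum_le _
  _ = (K : ℝ) * ∫ t in spanSet Ilo Ihi 𝒥, F t := by ring
  _ ≤ 6 * d * ∫ t in spanSet Ilo Ihi 𝒥, F t :=
        mul_le_mul_of_nonneg_right hKle hIF_nonneg


end BSHM
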